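/- Let σ̃ ∈ S_d be a permutation with a distinguished cycle c of length m = m₁ + m₂, where m₁, m₂ ≥ 1. The number of transpositions τ ∈ S_d such that τ∘σ̃ has cycle type obtained from that of σ̃ by cutting c into two cycles of lengths m₁ and m₂ equals m₁ + m₂ if m₁ ≠ m₂, and equals m₁ if m₁ = m₂. -/

import Mathlib

/-- The cycle (orbit) of the point `x` under the permutation `σ`. -/
def permOrbit {d : ℕ} (σ : Equiv.Perm (Fin d)) (x : Fin d) : Set (Fin d) :=
  {y | σ.SameCycle x y}

namespace CTC
open Equiv Equiv.Perm

variable {β : Type*} [DecidableEq β] [Fintype β]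

lemma mem_orbit_iff {d : ℕ} (σ : Equiv.Perm (Fin d)) (x y : Fin d) :
    y ∈ permOrbit σ x ↔ σ.SameCycle x y := Iff.rfl

lemma pow_apply_mod (g : Equiv.Perm β) (x : β) {t : ℕ} (hx : (g ^ t) x = x) (n : ℕ) :
    (g ^ n) x = (g ^ (n % t)) x := by
  have key : ∀ k, (g ^ (t * k)) x = x := by
    intro k
    induction k with
    | zero => simp
    | succ k ih => rw [Nat.mul_succ, pow_add, Equiv.Perm.mul_apply, hx, ih]
  conv_lhs => rw [← Nat.mod_add_div n t]
  rw [pow_add, Equiv.Perm.mul_apply, key]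

lemma orbit_eq_of_same {d : ℕ} {σ : Equiv.Perm (Fin d)} {x y : Fin d}
    (h : σ.SameCycle x y) : permOrbit σ y = permOrbit σ x := by
  ext z
  exact ⟨fun hz => h.trans hz, fun hz => h.symm.trans hz⟩

lemma orbit_eq_of_agree {d : ℕ} (g h : Equiv.Perm (Fin d)) (x : Fin d)
    (H1 : ∀ y, g.SameCycle x y → h y = g y)
    (H2 : ∀ y, g.SameCycle x y → h⁻¹ y = g⁻¹ y) :
    permOrbit h x = permOrbit g x := by
  have pos : ∀ n : ℕ, (h ^ n) x = (g ^ n) x := by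
    intro n
    induction n with
    | zero => simp
    | succ n ih =>
      rw [pow_succ', pow_succ', Equiv.Perm.mul_apply, Equiv.Perm.mul_apply, ih,
        H1 _ ⟨n, by rw [zpow_natCast]⟩]
  have neg : ∀ n : ℕ, (h⁻¹ ^ n) x = (g⁻¹ ^ n) x := by
    intro n
    induction n with
    | zero => simp
    | succ n ih =>
      rw [pow_succ', pow_succ', Equiv.Perm.mul_apply, Equiv.Perm.mul_apply, ih,
        H2 _ ⟨-n, by rw [zpow_neg, zpow_natCast, ← inv_pow]⟩]
  have all : ∀ n : ℤ, (h ^ n) x = (g ^ n) x := by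
    intro n
    cases n with
    | ofNat n => rw [Int.ofNat_eq_natCast, zpow_natCast, zpow_natCast]; exact pos n
    | negSucc n =>
      rw [zpow_negSucc, zpow_negSucc, ← inv_pow, ← inv_pow]; exact neg (n + 1)
  ext z
  constructor
  · rintro ⟨n, rfl⟩; exact ⟨n, (all n).symm⟩
  · rintro ⟨n, rfl⟩; exact ⟨n, all n⟩


variable {d : ℕ} (σ : Equiv.Perm (Fin d)) (a : Fin d) (m : ℕ)

lemma L_mem (i : ℕ) : (σ ^ i) a ∈ permOrbit σ a :=
  ⟨(i : ℤ), by rw [zpow_natCast]⟩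

lemma L_E1 (hσa : σ a ≠ a) (hM : (σ.cycleOf a).support.card = m) (i j : ℕ) :
    (σ ^ i) a = (σ ^ j) a ↔ i % m = j % m := by
  have := Equiv.Perm.zpow_eq_zpow_on_iff σ (m := (i : ℤ)) (n := (j : ℤ)) hσa
  rw [zpow_natCast, zpow_natCast, hM] at this
  rw [this]
  omega

lemma L_orbitS (hσa : σ a ≠ a) :
    permOrbit σ a = ↑(σ.cycleOf a).support := by
  ext y
  rw [Finset.mem_coe, Equiv.Perm.mem_support_cycleOf_iff]
  simp only [permOrbit, Set.mem_setOf_eq, Equiv.Perm.mem_support]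
  exact ⟨fun h => ⟨h, hσa⟩, fun h => h.1⟩

lemma L_surj (hσa : σ a ≠ a) (hM : (σ.cycleOf a).support.card = m) :
    ∀ y ∈ permOrbit σ a, ∃ i < m, (σ ^ i) a = y := by
  intro y hy
  have := Equiv.Perm.SameCycle.exists_pow_eq_of_mem_support (f := σ) (x := a) (y := y) hy
    (Equiv.Perm.mem_support.2 hσa)
  rwa [hM] at this

lemma L_ncard (hσa : σ a ≠ a) (hM : (σ.cycleOf a).support.card = m) :
    (permOrbit σ a).ncard = m := by
  rw [L_orbitS σ a hσa, Set.ncard_coe_finset, hM]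


/-- the transposition cutting the cycle at positions `i` and `i+t`. -/
def cutSwap {d : ℕ} (σ : Equiv.Perm (Fin d)) (a : Fin d) (i t : ℕ) : Equiv.Perm (Fin d) :=
  Equiv.swap ((σ ^ i) a) ((σ ^ (i + t)) a)

lemma cutSwap_def {d : ℕ} (σ : Equiv.Perm (Fin d)) (a : Fin d) (i t : ℕ) :
    cutSwap σ a i t = Equiv.swap ((σ ^ i) a) ((σ ^ (i + t)) a) := rfl

/-- the segment of the orbit starting at position `i` of length `t`. -/
def orbSeg {d : ℕ} (σ : Equiv.Perm (Fin d)) (a : Fin d) (i t : ℕ) : Set (Fin d) :=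
  (fun s => (σ ^ (i + s)) a) '' Set.Iio t

lemma mem_orbSeg {d : ℕ} (σ : Equiv.Perm (Fin d)) (a : Fin d) (i t : ℕ) (y : Fin d) :
    y ∈ orbSeg σ a i t ↔ ∃ s < t, (σ ^ (i + s)) a = y := by
  simp only [orbSeg, Set.mem_image, Set.mem_Iio]

lemma mod_lt_eq {x y : ℕ} (h : x % m = y % m) (hx : x < m) (hy : y < m) : x = y := by
  rwa [Nat.mod_eq_of_lt hx, Nat.mod_eq_of_lt hy] at h

lemma modeq_bounded {m x y : ℕ} (h : x % m = y % m) (hxy : x ≤ y) (hlt : y - x < m) : x = y := by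
  have hdvd : m ∣ y - x := (Nat.modEq_iff_dvd' hxy).1 h
  rcases Nat.eq_zero_or_pos (y - x) with h0 | hpos
  · omega
  · have := Nat.le_of_dvd hpos hdvd; omega

lemma pow_apply_succ {d : ℕ} (σ : Equiv.Perm (Fin d)) (a : Fin d) (n : ℕ) :
    σ ((σ ^ n) a) = (σ ^ (n + 1)) a := by
  rw [pow_succ', Equiv.Perm.mul_apply]

variable (hσa : σ a ≠ a) (hM : (σ.cycleOf a).support.card = m)
variable {i t : ℕ} (ht0 : 0 < t) (htm : t < m)

include hσa hM ht0 htm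

lemma C1 : ∀ s ≤ t, ((cutSwap σ a i t * σ) ^ s) ((σ ^ i) a) =
    if s = t then (σ ^ i) a else (σ ^ (i + s)) a := by
  have E1 := L_E1 σ a m hσa hM
  intro s hs
  induction s with
  | zero => rw [if_neg ht0.ne]; simp
  | succ s ih =>
    have hst : s < t := hs
    have ihv := ih hst.le
    rw [if_neg hst.ne] at ihv
    rw [pow_succ', Equiv.Perm.mul_apply, ihv, Equiv.Perm.mul_apply,
      pow_apply_succ, cutSwap_def]
    by_cases hts : s + 1 = t
    · rw [if_pos hts]
      have heq : (σ ^ (i + s + 1)) a = (σ ^ (i + t)) a := by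
        rw [show i + s + 1 = i + t by omega]
      rw [heq, Equiv.swap_apply_right]
    · rw [if_neg hts]
      have h1 : (σ ^ (i + s + 1)) a ≠ (σ ^ i) a := by
        rw [Ne, E1]
        intro h
        have := modeq_bounded h.symm (by omega) (by omega)
        omega
      have h2 : (σ ^ (i + s + 1)) a ≠ (σ ^ (i + t)) a := by
        rw [Ne, E1]
        intro h
        have := modeq_bounded h (by omega) (by omega)
        omega
      rw [Equiv.swap_apply_of_ne_of_ne h1 h2, show i + (s + 1) = i + s + 1 by omega]

lemma C2 : permOrbit (cutSwap σ a i t * σ) ((σ ^ i) a) = orbSeg σ a i t := by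
  have C1' := C1 σ a m hσa hM ht0 htm (i := i)
  have hfix : ((cutSwap σ a i t * σ) ^ t) ((σ ^ i) a) = (σ ^ i) a := by
    rw [C1' t le_rfl, if_pos rfl]
  ext y
  rw [mem_orbSeg]
  constructor
  · intro hy
    obtain ⟨n, hn, hny⟩ := Equiv.Perm.SameCycle.exists_pow_eq' hy
    rw [pow_apply_mod _ _ hfix n] at hny
    have hlt : n % t < t := Nat.mod_lt _ ht0
    refine ⟨n % t, hlt, ?_⟩
    have hc := C1' (n % t) hlt.le
    rw [if_neg hlt.ne] at hc
    rw [← hny, hc]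
  · rintro ⟨s, hs, rfl⟩
    exact ⟨(s : ℤ), by rw [zpow_natCast, C1' s (le_of_lt hs), if_neg (ne_of_lt hs)]⟩

omit ht0 htm in
lemma C3 (htm' : t ≤ m) : (orbSeg σ a i t).ncard = t := by
  have E1 := L_E1 σ a m hσa hM
  have : orbSeg σ a i t = ↑((Finset.range t).image (fun s => (σ ^ (i + s)) a)) := by
    ext y
    rw [mem_orbSeg, Finset.coe_image, Set.mem_image]
    simp only [Finset.mem_coe, Finset.mem_range]
  rw [this, Set.ncard_coe_finset, Finset.card_image_of_injOn, Finset.card_range]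
  intro s hs s' hs' h
  simp only [Finset.coe_range, Set.mem_Iio] at hs hs'
  rw [E1] at h
  have h2 : s % m = s' % m := Nat.ModEq.add_left_cancel' i h
  exact mod_lt_eq m h2 (lt_of_lt_of_le hs htm') (lt_of_lt_of_le hs' htm')

lemma C4 : orbSeg σ a i t ∪ orbSeg σ a (i + t) (m - t) = permOrbit σ a := by
  have E1 := L_E1 σ a m hσa hM
  apply Set.Subset.antisymm
  · rintro y (⟨s, _, rfl⟩ | ⟨s, _, rfl⟩) <;> exact L_mem σ a _
  · intro y hy
    obtain ⟨k, hk, rfl⟩ := L_surj σ a m hσa hM y hy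
    have hm0 : 0 < m := lt_trans ht0 htm
    set s := (k + m - i % m) % m with hsdef
    have hsm : s < m := Nat.mod_lt _ hm0
    have hes : (σ ^ (i + s)) a = (σ ^ k) a := by
      rw [E1]
      have him : i % m < m := Nat.mod_lt _ hm0
      have e1 : Nat.ModEq m (i + s) (i % m + (k + m - i % m)) :=
        Nat.ModEq.add (Nat.mod_modEq i m).symm (Nat.mod_modEq _ m)
      have e2 : i % m + (k + m - i % m) = k + m := by omega
      rw [e2] at e1
      exact e1.trans (Nat.add_modEq_right)
    by_cases hst : s < t
    · exact Or.inl ((mem_orbSeg σ a i t _).2 ⟨s, hst, hes⟩)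
    · refine Or.inr ((mem_orbSeg σ a (i + t) (m - t) _).2 ⟨s - t, by omega, ?_⟩)
      rw [show i + t + (s - t) = i + s by omega, hes]

lemma C5 : ¬ (cutSwap σ a i t * σ).SameCycle ((σ ^ i) a) ((σ ^ (i + t)) a) := by
  have E1 := L_E1 σ a m hσa hM
  intro h
  have hmem : (σ ^ (i + t)) a ∈ orbSeg σ a i t := by
    rw [← C2 σ a m hσa hM ht0 htm]; exact h
  obtain ⟨s, hs, hse⟩ := (mem_orbSeg σ a i t _).1 hmem
  rw [E1] at hse
  have h2 : s % m = t % m := Nat.ModEq.add_left_cancel' i hse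
  have := mod_lt_eq m h2 (lt_trans hs htm) htm
  omega

omit ht0 htm in
lemma C7 : ∀ x : Fin d, x ∉ permOrbit σ a →
    permOrbit (cutSwap σ a i t * σ) x = permOrbit σ x := by
  intro x hx
  have hout : ∀ y, σ.SameCycle x y → y ∉ permOrbit σ a := by
    intro y hxy hy
    exact hx (hy.trans hxy.symm)
  apply orbit_eq_of_agree
  · intro y hxy
    rw [Equiv.Perm.mul_apply, cutSwap_def]
    have hσy : σ y ∉ permOrbit σ a := hout _ (hxy.trans ⟨1, by simp⟩)
    exact Equiv.swap_apply_of_ne_of_ne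
      (fun h => hσy (by rw [h]; exact L_mem σ a i))
      (fun h => hσy (by rw [h]; exact L_mem σ a (i + t)))
  · intro y hxy
    rw [mul_inv_rev, Equiv.Perm.mul_apply, cutSwap_def, Equiv.swap_inv]
    have hyS : y ∉ permOrbit σ a := hout _ hxy
    rw [Equiv.swap_apply_of_ne_of_ne
      (fun h => hyS (by rw [h]; exact L_mem σ a i))
      (fun h => hyS (by rw [h]; exact L_mem σ a (i + t)))]


omit ht0 htm in
lemma L_shift (hm0 : 0 < m) (k : ℕ) :
    (σ ^ (i + (k + m - i % m) % m)) a = (σ ^ k) a := by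
  rw [L_E1 σ a m hσa hM]
  have him : i % m < m := Nat.mod_lt _ hm0
  have e1 : Nat.ModEq m (i + (k + m - i % m) % m) (i % m + (k + m - i % m)) :=
    Nat.ModEq.add (Nat.mod_modEq i m).symm (Nat.mod_modEq _ m)
  have e2 : i % m + (k + m - i % m) = k + m := by omega
  rw [e2] at e1
  exact e1.trans (Nat.add_modEq_right)

omit hσa hM ht0 htm in
lemma swap_eq_cases {a b c e : Fin d} (hab : a ≠ b) (h : Equiv.swap a b = Equiv.swap c e) :
    (a = c ∧ b = e) ∨ (a = e ∧ b = c) := by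
  have h1 : Equiv.swap c e a = b := by rw [← h, Equiv.swap_apply_left]
  by_cases hac : a = c
  · subst hac
    rw [Equiv.swap_apply_left] at h1
    exact Or.inl ⟨rfl, h1.symm⟩
  · by_cases hae : a = e
    · subst hae
      rw [Equiv.swap_apply_right] at h1
      exact Or.inr ⟨rfl, h1.symm⟩
    · rw [Equiv.swap_apply_of_ne_of_ne hac hae] at h1
      exact absurd h1 hab

section Main

variable {m₁ m₂ : ℕ} (h₁ : 1 ≤ m₁) (h₂ : 1 ≤ m₂)
  (hM2 : (σ.cycleOf a).support.card = m₁ + m₂)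

omit ht0 htm
include h₁ h₂ hM2

omit hM in
lemma cut_ne (k : ℕ) : (σ ^ k) a ≠ (σ ^ (k + m₁)) a := by
  rw [Ne, L_E1 σ a (m₁ + m₂) hσa hM2]
  intro h
  have := modeq_bounded h (by omega) (by omega)
  omega

omit hM in
lemma cut_split (k : ℕ) : cutSwap σ a k m₁ = cutSwap σ a (k + m₁) m₂ := by
  rw [cutSwap_def, cutSwap_def]
  have : (σ ^ (k + m₁ + m₂)) a = (σ ^ k) a := by
    rw [L_E1 σ a (m₁ + m₂) hσa hM2, show k + m₁ + m₂ = k + (m₁ + m₂) by omega]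
    exact Nat.add_mod_right _ _
  rw [this, Equiv.swap_comm]

omit hM in
lemma forward (k : ℕ) :
    (cutSwap σ a k m₁).IsSwap ∧
    ∃ p ∈ permOrbit σ a, ∃ q ∈ permOrbit σ a,
      ¬ (cutSwap σ a k m₁ * σ).SameCycle p q ∧
      permOrbit (cutSwap σ a k m₁ * σ) p ∪ permOrbit (cutSwap σ a k m₁ * σ) q
        = permOrbit σ a ∧
      (permOrbit (cutSwap σ a k m₁ * σ) p).ncard = m₁ ∧
      (permOrbit (cutSwap σ a k m₁ * σ) q).ncard = m₂ ∧
      ∀ x : Fin d, x ∉ permOrbit σ a →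
        permOrbit (cutSwap σ a k m₁ * σ) x = permOrbit σ x := by
  have h1m : m₁ < m₁ + m₂ := by omega
  have h2m : m₂ < m₁ + m₂ := by omega
  have h10 : 0 < m₁ := h₁
  have h20 : 0 < m₂ := h₂
  have horb1 : permOrbit (cutSwap σ a k m₁ * σ) ((σ ^ k) a) = orbSeg σ a k m₁ :=
    C2 σ a (m₁ + m₂) hσa hM2 h10 h1m
  have horb2 : permOrbit (cutSwap σ a k m₁ * σ) ((σ ^ (k + m₁)) a)
      = orbSeg σ a (k + m₁) m₂ := by
    rw [cut_split σ a hσa h₁ h₂ hM2 k]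
    exact C2 σ a (m₁ + m₂) hσa hM2 h20 h2m
  refine ⟨⟨_, _, cut_ne σ a hσa h₁ h₂ hM2 k, cutSwap_def σ a k m₁⟩,
    (σ ^ k) a, L_mem σ a k, (σ ^ (k + m₁)) a, L_mem σ a (k + m₁), ?_, ?_, ?_, ?_, ?_⟩
  · exact C5 σ a (m₁ + m₂) hσa hM2 h10 h1m
  · rw [horb1, horb2]
    have := C4 σ a (m₁ + m₂) hσa hM2 h10 h1m (i := k)
    rwa [show m₁ + m₂ - m₁ = m₂ by omega] at this
  · rw [horb1]; exact C3 σ a (m₁ + m₂) hσa hM2 (le_of_lt h1m)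
  · rw [horb2]; exact C3 σ a (m₁ + m₂) hσa hM2 (le_of_lt h2m)
  · exact C7 σ a (m₁ + m₂) hσa hM2


omit hM in
lemma backward (τ : Equiv.Perm (Fin d)) (hsw : τ.IsSwap)
    (p q : Fin d) (hp : p ∈ permOrbit σ a) (hq : q ∈ permOrbit σ a)
    (hnsc : ¬ (τ * σ).SameCycle p q)
    (hun : permOrbit (τ * σ) p ∪ permOrbit (τ * σ) q = permOrbit σ a)
    (hnp : (permOrbit (τ * σ) p).ncard = m₁)
    (hnq : (permOrbit (τ * σ) q).ncard = m₂)
    (hfix : ∀ x : Fin d, x ∉ permOrbit σ a → permOrbit (τ * σ) x = permOrbit σ x) :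
    ∃ k, τ = cutSwap σ a k m₁ := by
  obtain ⟨u, v, huv, rfl⟩ := hsw
  have key : ∀ u' v' : Fin d, u' ≠ v' → Equiv.swap u v = Equiv.swap u' v' →
      v' ∈ permOrbit σ a := by
    intro u' v' huv' hswap
    by_contra hv'
    by_cases hu' : u' ∈ permOrbit σ a
    · have hσu' : σ⁻¹ u' ∈ permOrbit σ a := hu'.trans ⟨-1, by simp⟩
      rw [← hun] at hσu'
      have hc1 : (Equiv.swap u v * σ).SameCycle (σ⁻¹ u') v' :=
        ⟨1, by rw [zpow_one, Equiv.Perm.mul_apply, Equiv.Perm.inv_def, Equiv.apply_symm_apply, hswap,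
          Equiv.swap_apply_left]⟩
      rcases hσu' with h | h
      · exact hv' (by rw [← hun]; exact Set.mem_union_left _ (h.trans hc1))
      · exact hv' (by rw [← hun]; exact Set.mem_union_right _ (h.trans hc1))
    · have horb : permOrbit (Equiv.swap u v * σ) p = permOrbit σ p := by
        apply orbit_eq_of_agree
        · intro y hpy
          have hyS : σ y ∈ permOrbit σ a := (hp.trans hpy).trans ⟨1, by simp⟩
          rw [Equiv.Perm.mul_apply, hswap,
            Equiv.swap_apply_of_ne_of_ne (fun h => hu' (by rwa [h] at hyS))
              (fun h => hv' (by rwa [h] at hyS))]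
        · intro y hpy
          have hyS : y ∈ permOrbit σ a := hp.trans hpy
          rw [mul_inv_rev, Equiv.Perm.mul_apply, hswap, Equiv.swap_inv,
            Equiv.swap_apply_of_ne_of_ne (fun h => hu' (by rwa [h] at hyS))
              (fun h => hv' (by rwa [h] at hyS))]
      rw [horb, orbit_eq_of_same hp, L_ncard σ a (m₁ + m₂) hσa hM2] at hnp
      omega
  have hvS : v ∈ permOrbit σ a := key u v huv rfl
  have huS : u ∈ permOrbit σ a := key v u (Ne.symm huv) (Equiv.swap_comm u v)
  obtain ⟨i, him, hei⟩ := L_surj σ a (m₁ + m₂) hσa hM2 u huS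
  obtain ⟨j, hjm, hej⟩ := L_surj σ a (m₁ + m₂) hσa hM2 v hvS
  have hm0 : 0 < m₁ + m₂ := by omega
  obtain ⟨t, htdef⟩ : ∃ t, t = (j + (m₁ + m₂) - i % (m₁ + m₂)) % (m₁ + m₂) := ⟨_, rfl⟩
  have htm : t < m₁ + m₂ := htdef ▸ Nat.mod_lt _ hm0
  have het : (σ ^ (i + t)) a = (σ ^ j) a := by
    rw [htdef]; exact L_shift σ a (m₁ + m₂) hσa hM2 (i := i) hm0 j
  have ht0 : 0 < t := by
    rcases Nat.eq_zero_or_pos t with h0 | h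
    · exfalso; apply huv
      rw [← hei, ← hej, ← het, h0, add_zero]
    · exact h
  have hτ : Equiv.swap u v = cutSwap σ a i t := by
    rw [cutSwap_def, het, hei, hej]
  rw [hτ] at hnsc hun hnp hnq
  have hpS := hp
  rw [← C4 σ a (m₁ + m₂) hσa hM2 ht0 htm (i := i)] at hpS
  have hsplit : cutSwap σ a i t = cutSwap σ a (i + t) ((m₁ + m₂) - t) := by
    rw [cutSwap_def, cutSwap_def, show i + t + ((m₁ + m₂) - t) = i + (m₁ + m₂) by omega]
    have heq : (σ ^ (i + (m₁ + m₂))) a = (σ ^ i) a := by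
      rw [L_E1 σ a (m₁ + m₂) hσa hM2]; exact Nat.add_mod_right _ _
    rw [heq, Equiv.swap_comm]
  have ht0' : 0 < (m₁ + m₂) - t := by omega
  have htm' : (m₁ + m₂) - t < m₁ + m₂ := by omega
  rcases hpS with hseg | hseg
  · have hr' : p ∈ permOrbit (cutSwap σ a i t * σ) ((σ ^ i) a) := by
      rw [C2 σ a (m₁ + m₂) hσa hM2 ht0 htm]; exact hseg
    rw [orbit_eq_of_same hr', C2 σ a (m₁ + m₂) hσa hM2 ht0 htm,
      C3 σ a (m₁ + m₂) hσa hM2 htm.le] at hnp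
    exact ⟨i, by rw [hτ, hnp]⟩
  · have hr' : p ∈ permOrbit (cutSwap σ a (i + t) ((m₁ + m₂) - t) * σ) ((σ ^ (i + t)) a) := by
      rw [C2 σ a (m₁ + m₂) hσa hM2 ht0' htm']; exact hseg
    rw [hsplit, orbit_eq_of_same hr', C2 σ a (m₁ + m₂) hσa hM2 ht0' htm',
      C3 σ a (m₁ + m₂) hσa hM2 (by omega)] at hnp
    exact ⟨i + t, by rw [hτ, hsplit, hnp]⟩


omit hM in
lemma F_period (k : ℕ) :
    cutSwap σ a k m₁ = cutSwap σ a (k % (m₁ + m₂)) m₁ := by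
  rw [cutSwap_def, cutSwap_def]
  have e1 : (σ ^ k) a = (σ ^ (k % (m₁ + m₂))) a := by
    rw [L_E1 σ a (m₁ + m₂) hσa hM2]
    exact (Nat.mod_mod_of_dvd k dvd_rfl).symm
  have e2 : (σ ^ (k + m₁)) a = (σ ^ (k % (m₁ + m₂) + m₁)) a := by
    rw [L_E1 σ a (m₁ + m₂) hσa hM2]
    exact Nat.ModEq.add_right m₁ (Nat.mod_modEq k (m₁ + m₂)).symm
  rw [e1, e2]

omit hM in
lemma cut_inj {k k' : ℕ} (h : cutSwap σ a k m₁ = cutSwap σ a k' m₁)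
    (hk : k < m₁ + m₂) (hk' : k' < m₁ + m₂) :
    k = k' ∨ ((k' + m₁) % (m₁ + m₂) = k ∧ (k + m₁) % (m₁ + m₂) = k') := by
  have hne := cut_ne σ a hσa h₁ h₂ hM2 k
  rw [cutSwap_def, cutSwap_def] at h
  rcases swap_eq_cases hne h with ⟨hA, hB⟩ | ⟨hA, hB⟩
  · left
    rw [L_E1 σ a (m₁ + m₂) hσa hM2] at hA
    exact mod_lt_eq (m₁ + m₂) hA hk hk'
  · right
    rw [L_E1 σ a (m₁ + m₂) hσa hM2] at hA hB
    constructor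
    · rw [← hA, Nat.mod_eq_of_lt hk]
    · rw [hB, Nat.mod_eq_of_lt hk']

end Main

end CTC


/-- Let `σ̃ ∈ S_d` have a distinguished cycle `c ∋ a` of length
`m = m₁ + m₂` with `m₁, m₂ ≥ 1`.  The number of transpositions `τ` such that `τ ∘ σ̃` has
the cycle type of `σ̃` with `c` cut into two cycles of lengths `m₁` and `m₂` (all other
cycles unchanged) equals `m₁ + m₂` if `m₁ ≠ m₂, and `m₁` if `m₁ = m₂`. -/
theorem count_transpositions_cutting
    {d : ℕ} (σ : Equiv.Perm (Fin d)) (a : Fin d) (m₁ m₂ : ℕ)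
    (h₁ : 1 ≤ m₁) (h₂ : 1 ≤ m₂)
    (hm : (permOrbit σ a).ncard = m₁ + m₂) :
    {τ : Equiv.Perm (Fin d) | τ.IsSwap ∧
      ∃ p ∈ permOrbit σ a, ∃ q ∈ permOrbit σ a,
        ¬ (τ * σ).SameCycle p q ∧
        permOrbit (τ * σ) p ∪ permOrbit (τ * σ) q = permOrbit σ a ∧
        (permOrbit (τ * σ) p).ncard = m₁ ∧ (permOrbit (τ * σ) q).ncard = m₂ ∧
        ∀ x : Fin d, x ∉ permOrbit σ a → permOrbit (τ * σ) x = permOrbit σ x}.ncard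
      = if m₁ = m₂ then m₁ else m₁ + m₂ := by
  classical
  have hσa : σ a ≠ a := by
    intro h
    have hsub : permOrbit σ a ⊆ {a} := by
      rintro y ⟨n, rfl⟩
      simp [Equiv.Perm.zpow_apply_eq_self_of_apply_eq_self h]
    have hle := Set.ncard_le_ncard hsub (Set.finite_singleton a)
    rw [hm, Set.ncard_singleton] at hle
    omega
  have hM2 : (σ.cycleOf a).support.card = m₁ + m₂ := by
    rw [← hm, CTC.L_orbitS σ a hσa, Set.ncard_coe_finset]
  have hset : {τ : Equiv.Perm (Fin d) | τ.IsSwap ∧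
      ∃ p ∈ permOrbit σ a, ∃ q ∈ permOrbit σ a,
        ¬ (τ * σ).SameCycle p q ∧
        permOrbit (τ * σ) p ∪ permOrbit (τ * σ) q = permOrbit σ a ∧
        (permOrbit (τ * σ) p).ncard = m₁ ∧ (permOrbit (τ * σ) q).ncard = m₂ ∧
        ∀ x : Fin d, x ∉ permOrbit σ a → permOrbit (τ * σ) x = permOrbit σ x}
      = ↑((Finset.range (m₁ + m₂)).image (fun k => CTC.cutSwap σ a k m₁)) := by
    ext τ
    simp only [Set.mem_setOf_eq, Finset.coe_image, Set.mem_image, Finset.mem_coe,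
      Finset.mem_range]
    constructor
    · rintro ⟨hsw, p, hp, q, hq, hnsc, hun, hnp, hnq, hfix⟩
      obtain ⟨k, rfl⟩ := CTC.backward σ a hσa h₁ h₂ hM2 τ hsw p q hp hq hnsc hun hnp hnq hfix
      exact ⟨k % (m₁ + m₂), Nat.mod_lt _ (by omega),
        (CTC.F_period σ a hσa h₁ h₂ hM2 k).symm⟩
    · rintro ⟨k, hk, rfl⟩
      exact CTC.forward σ a hσa h₁ h₂ hM2 k
  rw [hset, Set.ncard_coe_finset]
  by_cases h12 : m₁ = m₂
  · rw [if_pos h12]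
    have him : (Finset.range (m₁ + m₂)).image (fun k => CTC.cutSwap σ a k m₁)
        = (Finset.range m₁).image (fun k => CTC.cutSwap σ a k m₁) := by
      apply Finset.Subset.antisymm
      · intro τ hτ
        rw [Finset.mem_image] at hτ ⊢
        obtain ⟨k, hk, rfl⟩ := hτ
        rw [Finset.mem_range] at hk
        by_cases hk1 : k < m₁
        · exact ⟨k, Finset.mem_range.2 hk1, rfl⟩
        · refine ⟨k - m₁, Finset.mem_range.2 (by omega), ?_⟩
          have hcs := CTC.cut_split σ a hσa h₁ h₂ hM2 (k - m₁)
          rwa [show k - m₁ + m₁ = k by omega, ← h12] at hcs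
      · exact Finset.image_subset_image (Finset.range_subset_range.2 (by omega))
    rw [him, Finset.card_image_of_injOn, Finset.card_range]
    intro k hk k' hk' h
    simp only [Finset.coe_range, Set.mem_Iio] at hk hk'
    rcases CTC.cut_inj σ a hσa h₁ h₂ hM2 h (by omega) (by omega) with h' | ⟨hA, hB⟩
    · exact h'
    · rw [Nat.mod_eq_of_lt (by omega)] at hA
      omega
  · rw [if_neg h12, Finset.card_image_of_injOn, Finset.card_range]
    intro k hk k' hk' h
    simp only [Finset.coe_range, Set.mem_Iio] at hk hk'
    rcases CTC.cut_inj σ a hσa h₁ h₂ hM2 h hk hk' with h' | ⟨hA, hB⟩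
    · exact h'
    · exfalso
      have X : Nat.ModEq (m₁ + m₂) (k' + m₁) k := by
        unfold Nat.ModEq; rw [hA, Nat.mod_eq_of_lt hk]
      have Y : Nat.ModEq (m₁ + m₂) (k + m₁) k' := by
        unfold Nat.ModEq; rw [hB, Nat.mod_eq_of_lt hk']
      have Z : Nat.ModEq (m₁ + m₂) (k' + m₁ + m₁) k' := (X.add_right m₁).trans Y
      have hdvd : (m₁ + m₂) ∣ (k' + m₁ + m₁) - k' :=
        (Nat.modEq_iff_dvd' (by omega)).1 Z.symm
      obtain ⟨c, hc⟩ := hdvd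
      match c with
      | 0 => omega
      | 1 => omega
      | (c + 2) =>
        have h2c : (m₁ + m₂) * 2 ≤ (m₁ + m₂) * (c + 2) :=
          Nat.mul_le_mul_left _ (by omega)
        rw [← hc] at h2c
        omega
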